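/- Let T₁, …, T_d be Cuntz isometries on a Hilbert space H, and suppose Sᵢ = [[Tᵢ, Aᵢ],[Bᵢ, Cᵢ]] are operators on H ⊕ K such that ‖λ₁S₁ + … + λ_dS_d‖ ≤ 1 for all unit vectors λ ∈ ℂ^d. Then all Aᵢ = 0 and all Bᵢ = 0; i.e., the only such dilations of a Cuntz tuple are trivial. -/

import Mathlib

open ContinuousLinearMap
open scoped InnerProductSpace

section aux
variable {E F : Type*} [NormedAddCommGroup E] [InnerProductSpace ℂ E] [CompleteSpace E]
  [NormedAddCommGroup F] [InnerProductSpace ℂ F] [CompleteSpace F]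

lemma aux_apply_one (A : E →L[ℂ] F) (h : adjoint A ∘L A = 1) (x : E) :
    adjoint A (A x) = x := by
  have := congrArg (fun (B : E →L[ℂ] E) => B x) h
  simpa using this

lemma aux_inner_isom (A : E →L[ℂ] F) (h : adjoint A ∘L A = 1) (a b : E) :
    ⟪A a, A b⟫_ℂ = ⟪a, b⟫_ℂ := by
  rw [← ContinuousLinearMap.adjoint_inner_right, aux_apply_one A h]

lemma aux_norm_isom (A : E →L[ℂ] F) (h : adjoint A ∘L A = 1) (a : E) :
    ‖A a‖ = ‖a‖ := by
  have h1 : RCLike.re ⟪A a, A a⟫_ℂ = RCLike.re ⟪a, a⟫_ℂ := by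
    rw [aux_inner_isom A h]
  rw [inner_self_eq_norm_sq, inner_self_eq_norm_sq] at h1
  nlinarith [norm_nonneg (A a), norm_nonneg a]

end aux

section aux2
variable {E F : Type*} [NormedAddCommGroup E] [InnerProductSpace ℂ E] [CompleteSpace E]
  [NormedAddCommGroup F] [InnerProductSpace ℂ F] [CompleteSpace F]

omit [CompleteSpace E] [CompleteSpace F] in
lemma aux_norm_eq_of_inner {u : F} {y : E} (h : ⟪u,u⟫_ℂ = ⟪y,y⟫_ℂ) : ‖u‖ = ‖y‖ := by
  have h1 : RCLike.re ⟪u, u⟫_ℂ = RCLike.re ⟪y, y⟫_ℂ := by rw [h]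
  rw [inner_self_eq_norm_sq, inner_self_eq_norm_sq] at h1
  nlinarith [norm_nonneg u, norm_nonneg y]

lemma aux_inner_left (V : E →L[ℂ] F) (a : E) (w : F) :
    ⟪V a, w⟫_ℂ = ⟪a, adjoint V w⟫_ℂ := (ContinuousLinearMap.adjoint_inner_right V a w).symm

end aux2

section main
variable {H H' : Type*} [NormedAddCommGroup H] [InnerProductSpace ℂ H] [CompleteSpace H]
  [NormedAddCommGroup H'] [InnerProductSpace ℂ H'] [CompleteSpace H']
  {d : ℕ} {T : Fin d → H →L[ℂ] H} {V : H →L[ℂ] H'} {S : Fin d → H' →L[ℂ] H'}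

lemma key_isom (hTT : ∀ i j, adjoint (T i) ∘L T j = if i = j then 1 else 0)
    (lam : Fin d → ℂ) (hl : ∑ i, ‖lam i‖ ^ 2 = 1) (y : H) :
    ⟪(∑ i, lam i • T i) y, (∑ i, lam i • T i) y⟫_ℂ = ⟪y, y⟫_ℂ := by
  have hij : ∀ i j, ⟪T i y, T j y⟫_ℂ = if i = j then ⟪y, y⟫_ℂ else 0 := by
    intro i j
    rw [← ContinuousLinearMap.adjoint_inner_right]
    have := congrArg (fun (B : H →L[ℂ] H) => B y) (hTT i j)
    simp only [ContinuousLinearMap.coe_comp', Function.comp_apply] at this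
    rw [this]
    by_cases h : i = j <;> simp [h]
  simp only [ContinuousLinearMap.sum_apply, ContinuousLinearMap.smul_apply]
  rw [sum_inner]
  have : ∀ i ∈ Finset.univ, ⟪lam i • T i y, ∑ j, lam j • T j y⟫_ℂ
      = (starRingEnd ℂ) (lam i) * lam i * ⟪y, y⟫_ℂ := by
    intro i _
    rw [inner_sum]
    rw [Finset.sum_congr rfl (fun j _ => by rw [inner_smul_left, inner_smul_right, hij i j])]
    simp [mul_ite, Finset.sum_ite_eq, mul_assoc]
  rw [Finset.sum_congr rfl this, ← Finset.sum_mul]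
  have : ∑ i, (starRingEnd ℂ) (lam i) * lam i = 1 := by
    have := congrArg (fun r : ℝ => (r : ℂ)) hl
    push_cast at this
    rw [← this]
    exact Finset.sum_congr rfl fun i _ => by rw [Complex.conj_mul']
  rw [this, one_mul]

lemma key_col (hTT : ∀ i j, adjoint (T i) ∘L T j = if i = j then 1 else 0)
    (hV : adjoint V ∘L V = 1)
    (hcomp : ∀ i, adjoint V ∘L S i ∘L V = T i)
    (hnorm : ∀ lam : Fin d → ℂ, ∑ i, ‖lam i‖ ^ 2 = 1 → ‖∑ i, lam i • S i‖ ≤ 1)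
    (lam : Fin d → ℂ) (hl : ∑ i, ‖lam i‖ ^ 2 = 1) (x : H) :
    (∑ i, lam i • S i) (V x) = V ((∑ i, lam i • T i) x) := by
  set Tl := ∑ i, lam i • T i with hTl
  set Sl := ∑ i, lam i • S i with hSl
  have hcompl : adjoint V (Sl (V x)) = Tl x := by
    simp only [hSl, hTl, ContinuousLinearMap.sum_apply, ContinuousLinearMap.smul_apply,
      map_sum, map_smul]
    refine Finset.sum_congr rfl fun i _ => ?_
    have := congrArg (fun (B : H →L[ℂ] H) => B x) (hcomp i)
    simp only [ContinuousLinearMap.coe_comp', Function.comp_apply] at this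
    rw [this]
  set r := Sl (V x) - V (Tl x) with hr
  have hdec : Sl (V x) = V (Tl x) + r := by rw [hr]; abel
  have horth : ⟪V (Tl x), r⟫_ℂ = 0 := by
    rw [hr, inner_sub_right, aux_inner_left V (Tl x) (Sl (V x)), hcompl,
      aux_inner_isom V hV, sub_self]
  have hnorms : ‖Sl (V x)‖ ^ 2 = ‖x‖ ^ 2 + ‖r‖ ^ 2 := by
    rw [hdec, norm_add_sq (𝕜 := ℂ), horth]
    rw [aux_norm_isom V hV, aux_norm_eq_of_inner (key_isom hTT lam hl x)]
    simp
  have hle : ‖Sl (V x)‖ ≤ ‖x‖ := by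
    calc ‖Sl (V x)‖ ≤ ‖Sl‖ * ‖V x‖ := Sl.le_opNorm _
    _ ≤ 1 * ‖x‖ := by
        rw [aux_norm_isom V hV]
        exact mul_le_mul_of_nonneg_right (hnorm lam hl) (norm_nonneg x)
    _ = ‖x‖ := one_mul _
  have hr0 : r = 0 := by
    have : ‖r‖ ^ 2 ≤ 0 := by nlinarith [norm_nonneg (Sl (V x)), norm_nonneg x]
    have : ‖r‖ = 0 := by nlinarith [norm_nonneg r]
    exact norm_eq_zero.mp this
  rw [hdec, hr0, add_zero]

end main

section main2
variable {H H' : Type*} [NormedAddCommGroup H] [InnerProductSpace ℂ H] [CompleteSpace H]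
  [NormedAddCommGroup H'] [InnerProductSpace ℂ H'] [CompleteSpace H']
  {d : ℕ} {T : Fin d → H →L[ℂ] H} {V : H →L[ℂ] H'} {S : Fin d → H' →L[ℂ] H'}

lemma key_orth (hTT : ∀ i j, adjoint (T i) ∘L T j = if i = j then 1 else 0)
    (hV : adjoint V ∘L V = 1)
    (hcomp : ∀ i, adjoint V ∘L S i ∘L V = T i)
    (hnorm : ∀ lam : Fin d → ℂ, ∑ i, ‖lam i‖ ^ 2 = 1 → ‖∑ i, lam i • S i‖ ≤ 1)
    (lam : Fin d → ℂ) (hl : ∑ i, ‖lam i‖ ^ 2 = 1) (z : H') (x : H) :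
    ⟪(∑ i, lam i • T i) x,
      adjoint V ((∑ i, lam i • S i) (z - V (adjoint V z)))⟫_ℂ = 0 := by
  set Tl := ∑ i, lam i • T i with hTl
  set Sl := ∑ i, lam i • S i with hSl
  set z' := z - V (adjoint V z) with hz'
  set a := adjoint V (Sl z') with ha
  have hz'orth : ∀ b : H, ⟪V b, z'⟫_ℂ = 0 := by
    intro b
    rw [aux_inner_left V b z', hz', map_sub, aux_apply_one V hV, sub_self, inner_zero_right]
  have hTlnorm : ∀ y : H, ‖Tl y‖ = ‖y‖ := fun y =>
    aux_norm_eq_of_inner (key_isom hTT lam hl y)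
  have hineq : ∀ y : H, 2 * RCLike.re ⟪Tl y, a⟫_ℂ + ‖a‖ ^ 2 ≤ ‖z'‖ ^ 2 := by
    intro y
    set w := V y + z' with hw
    have hwnorm : ‖w‖ ^ 2 = ‖y‖ ^ 2 + ‖z'‖ ^ 2 := by
      rw [hw, norm_add_sq (𝕜 := ℂ), hz'orth y, aux_norm_isom V hV]
      simp
    set r' := Sl z' - V a with hr'
    have hSw : Sl w = V (Tl y + a) + r' := by
      rw [hw, map_add, key_col hTT hV hcomp hnorm lam hl y, map_add, hr']
      abel
    have horth' : ⟪V (Tl y + a), r'⟫_ℂ = 0 := by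
      rw [aux_inner_left, hr', map_sub, aux_apply_one V hV, ← ha, sub_self,
        inner_zero_right]
    have hSwnorm : ‖Sl w‖ ^ 2 = ‖Tl y + a‖ ^ 2 + ‖r'‖ ^ 2 := by
      rw [hSw, norm_add_sq (𝕜 := ℂ), horth', aux_norm_isom V hV]
      simp
    have hle : ‖Sl w‖ ≤ ‖w‖ := by
      calc ‖Sl w‖ ≤ ‖Sl‖ * ‖w‖ := Sl.le_opNorm w
      _ ≤ 1 * ‖w‖ := mul_le_mul_of_nonneg_right (hnorm lam hl) (norm_nonneg w)
      _ = ‖w‖ := one_mul _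
    have hexp : ‖Tl y + a‖ ^ 2 = ‖y‖ ^ 2 + 2 * RCLike.re ⟪Tl y, a⟫_ℂ + ‖a‖ ^ 2 := by
      rw [norm_add_sq (𝕜 := ℂ), hTlnorm y]
    nlinarith [norm_nonneg r', norm_nonneg (Sl w), norm_nonneg w, sq_nonneg ‖r'‖]
  have hC : 0 ≤ ‖z'‖ ^ 2 - ‖a‖ ^ 2 := by
    have h0 := hineq 0
    simp only [map_zero, inner_zero_left, norm_zero] at h0
    simpa using h0
  show ⟪Tl x, a⟫_ℂ = 0
  by_contra hw0
  set w0 := ⟪Tl x, a⟫_ℂ with hw0def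
  have hw0pos : 0 < ‖w0‖ ^ 2 := by
    have : 0 < ‖w0‖ := norm_pos_iff.mpr hw0
    positivity
  set D := ‖z'‖ ^ 2 - ‖a‖ ^ 2 with hD
  set t : ℝ := (D + 1) / (2 * ‖w0‖ ^ 2) with ht
  have hkey := hineq (((t : ℂ) * w0) • x)
  have hTls : Tl ((((t : ℂ) * w0)) • x) = ((t : ℂ) * w0) • Tl x := map_smul _ _ _
  rw [hTls, inner_smul_left] at hkey
  have hval : (starRingEnd ℂ) ((t : ℂ) * w0) * w0 = ((t * ‖w0‖ ^ 2 : ℝ) : ℂ) := by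
    rw [map_mul, Complex.conj_ofReal, mul_assoc, Complex.conj_mul']
    push_cast
    ring
  rw [hval] at hkey
  have hre : RCLike.re (((t * ‖w0‖ ^ 2 : ℝ) : ℂ)) = t * ‖w0‖ ^ 2 :=
    Complex.ofReal_re _
  rw [hre] at hkey
  have hn : ‖w0‖ ^ 2 ≠ 0 := ne_of_gt hw0pos
  have h2t : 2 * (t * ‖w0‖ ^ 2) = D + 1 := by
    rw [ht, div_mul_eq_mul_div, mul_div_mul_right _ _ hn]
    ring
  nlinarith [hkey]

end main2

lemma polar {d : ℕ} (c : Fin d → Fin d → ℂ)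
    (h : ∀ lam : Fin d → ℂ,
      ∑ i, ∑ j, (starRingEnd ℂ) (lam i) * (lam j * c i j) = 0) :
    ∀ i j, c i j = 0 := by
  let A : EuclideanSpace ℂ (Fin d) →ₗ[ℂ] EuclideanSpace ℂ (Fin d) :=
    { toFun := fun lam => WithLp.toLp 2 (fun j => ∑ i, lam i * (starRingEnd ℂ) (c i j))
      map_add' := by
        intro u v; ext j
        simp [add_mul, Finset.sum_add_distrib]
      map_smul' := by
        intro r u; ext j
        simp [Finset.mul_sum, mul_assoc] }
  have hA : ∀ lam : EuclideanSpace ℂ (Fin d), ⟪A lam, lam⟫_ℂ = 0 := by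
    intro lam
    rw [PiLp.inner_apply]
    have hterm : ∀ j, ⟪A lam j, lam j⟫_ℂ
        = ∑ i, (starRingEnd ℂ) (lam i) * (lam j * c i j) := by
      intro j
      rw [RCLike.inner_apply]
      show lam j * (starRingEnd ℂ) (∑ i, lam i * (starRingEnd ℂ) (c i j)) = _
      rw [map_sum, Finset.mul_sum]
      refine Finset.sum_congr rfl fun i _ => ?_
      simp only [map_mul, RingHomCompTriple.comp_apply, RingHom.id_apply, Complex.conj_conj]
      ring
    rw [Finset.sum_congr rfl fun j _ => hterm j, Finset.sum_comm]
    exact h lam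
  have hA0 : A = 0 := (inner_map_self_eq_zero A).mp hA
  intro i j
  have := congrArg (fun B : EuclideanSpace ℂ (Fin d) →ₗ[ℂ] EuclideanSpace ℂ (Fin d) =>
    B (EuclideanSpace.single i 1) j) hA0
  simp only [LinearMap.zero_apply] at this
  have hx : A (EuclideanSpace.single i 1) j = (starRingEnd ℂ) (c i j) := by
    show (∑ k, (EuclideanSpace.single i (1:ℂ)) k * (starRingEnd ℂ) (c k j)) = _
    rw [Finset.sum_eq_single i]
    · simp
    · intro k _ hk; simp [EuclideanSpace.single_apply, hk]
    · intro hmem; simp at hmem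
  rw [hx] at this
  have h2 : (starRingEnd ℂ) (c i j) = 0 := by simpa using this
  simpa using congrArg (starRingEnd ℂ) h2

section main3
variable {H H' : Type*} [NormedAddCommGroup H] [InnerProductSpace ℂ H] [CompleteSpace H]
  [NormedAddCommGroup H'] [InnerProductSpace ℂ H'] [CompleteSpace H']
  {d : ℕ} {T : Fin d → H →L[ℂ] H} {V : H →L[ℂ] H'} {S : Fin d → H' →L[ℂ] H'}

lemma key_scalar (hTT : ∀ i j, adjoint (T i) ∘L T j = if i = j then 1 else 0)
    (hV : adjoint V ∘L V = 1)
    (hcomp : ∀ i, adjoint V ∘L S i ∘L V = T i)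
    (hnorm : ∀ lam : Fin d → ℂ, ∑ i, ‖lam i‖ ^ 2 = 1 → ‖∑ i, lam i • S i‖ ≤ 1)
    (lam : Fin d → ℂ) (hl : ∑ i, ‖lam i‖ ^ 2 = 1) (z : H') (x : H) :
    ∑ i, ∑ j, (starRingEnd ℂ) (lam i) *
      (lam j * ⟪T i x, adjoint V (S j (z - V (adjoint V z)))⟫_ℂ) = 0 := by
  have h := key_orth hTT hV hcomp hnorm lam hl z x
  simp only [ContinuousLinearMap.sum_apply, ContinuousLinearMap.smul_apply, map_sum,
    map_smul, sum_inner, inner_sum, inner_smul_left, inner_smul_right] at h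
  simp only [Finset.mul_sum] at h
  rw [Finset.sum_comm] at h
  rw [← h]
  exact Finset.sum_congr rfl fun i _ => Finset.sum_congr rfl fun j _ => by ring

lemma key_scalar_all (hTT : ∀ i j, adjoint (T i) ∘L T j = if i = j then 1 else 0)
    (hV : adjoint V ∘L V = 1)
    (hcomp : ∀ i, adjoint V ∘L S i ∘L V = T i)
    (hnorm : ∀ lam : Fin d → ℂ, ∑ i, ‖lam i‖ ^ 2 = 1 → ‖∑ i, lam i • S i‖ ≤ 1)
    (z : H') (x : H) (lam : Fin d → ℂ) :
    ∑ i, ∑ j, (starRingEnd ℂ) (lam i) *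
      (lam j * ⟪T i x, adjoint V (S j (z - V (adjoint V z)))⟫_ℂ) = 0 := by
  by_cases h0 : lam = 0
  · simp [h0]
  · have hex : ∃ i, lam i ≠ 0 := by
      by_contra hc
      push_neg at hc
      exact h0 (funext hc)
    obtain ⟨i0, hi0⟩ := hex
    set N := ∑ i, ‖lam i‖ ^ 2 with hN
    have hNpos : 0 < N := by
      have h1 : 0 < ‖lam i0‖ ^ 2 := by
        have : 0 < ‖lam i0‖ := norm_pos_iff.mpr hi0
        positivity
      have h2 : ∀ i ∈ Finset.univ, (0:ℝ) ≤ ‖lam i‖ ^ 2 := fun i _ => by positivity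
      exact Finset.sum_pos' h2 ⟨i0, Finset.mem_univ i0, h1⟩
    set n := Real.sqrt N with hn
    have hnpos : 0 < n := Real.sqrt_pos.mpr hNpos
    set mu : Fin d → ℂ := fun i => ((n⁻¹ : ℝ) : ℂ) * lam i with hmu
    have hml : ∑ i, ‖mu i‖ ^ 2 = 1 := by
      have : ∀ i ∈ Finset.univ, ‖mu i‖ ^ 2 = n⁻¹ ^ 2 * ‖lam i‖ ^ 2 := by
        intro i _
        rw [hmu]
        simp only [norm_mul, Complex.norm_real, Real.norm_eq_abs,
          abs_of_pos (inv_pos.mpr hnpos)]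
        ring
      rw [Finset.sum_congr rfl this, ← Finset.mul_sum, ← hN, inv_pow, hn,
        Real.sq_sqrt hNpos.le, inv_mul_cancel₀ hNpos.ne']
    have h := key_scalar hTT hV hcomp hnorm mu hml z x
    have hfact : ∑ i, ∑ j, (starRingEnd ℂ) (mu i) *
          (mu j * ⟪T i x, adjoint V (S j (z - V (adjoint V z)))⟫_ℂ)
        = (((n⁻¹ : ℝ) : ℂ)) ^ 2 * ∑ i, ∑ j, (starRingEnd ℂ) (lam i) *
          (lam j * ⟪T i x, adjoint V (S j (z - V (adjoint V z)))⟫_ℂ) := by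
      rw [Finset.mul_sum]
      refine Finset.sum_congr rfl fun i _ => ?_
      rw [Finset.mul_sum]
      refine Finset.sum_congr rfl fun j _ => ?_
      simp only [hmu, map_mul, Complex.conj_ofReal]
      ring
    rw [hfact] at h
    have hne : (((n⁻¹ : ℝ) : ℂ)) ^ 2 ≠ 0 :=
      pow_ne_zero _ (Complex.ofReal_ne_zero.mpr (inv_ne_zero hnpos.ne'))
    exact (mul_eq_zero.mp h).resolve_left hne

end main3

theorem cuntz_dilations_are_trivial
    (H : Type*) [NormedAddCommGroup H] [InnerProductSpace ℂ H] [CompleteSpace H]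
    (H' : Type*) [NormedAddCommGroup H'] [InnerProductSpace ℂ H'] [CompleteSpace H']
    (d : ℕ) (T : Fin d → H →L[ℂ] H)
    (hTT : ∀ i j, adjoint (T i) ∘L T j = if i = j then 1 else 0)
    (hsum : ∑ i, T i ∘L adjoint (T i) = 1)
    (V : H →L[ℂ] H') (hV : adjoint V ∘L V = 1)
    (S : Fin d → H' →L[ℂ] H')
    (hcomp : ∀ i, adjoint V ∘L S i ∘L V = T i)
    (hnorm : ∀ lam : Fin d → ℂ, ∑ i, ‖lam i‖ ^ 2 = 1 → ‖∑ i, lam i • S i‖ ≤ 1) :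
    ∀ i, adjoint V ∘L S i ∘L (1 - V ∘L adjoint V) = 0 ∧
      (1 - V ∘L adjoint V) ∘L S i ∘L V = 0 := by
  intro i
  have hc : ∀ (z : H') (x : H) (k j : Fin d),
      ⟪T k x, adjoint V (S j (z - V (adjoint V z)))⟫_ℂ = 0 := fun z x =>
    polar _ (key_scalar_all hTT hV hcomp hnorm z x)
  constructor
  · ext z
    simp only [ContinuousLinearMap.comp_apply, ContinuousLinearMap.sub_apply,
      ContinuousLinearMap.one_apply, ContinuousLinearMap.zero_apply,
      ContinuousLinearMap.coe_comp', Function.comp_apply]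
    set b := adjoint V (S i (z - V (adjoint V z))) with hb
    have hTb : ∀ k, adjoint (T k) b = 0 := by
      intro k
      have h1 : ⟪adjoint (T k) b, adjoint (T k) b⟫_ℂ = 0 := by
        rw [ContinuousLinearMap.adjoint_inner_left, ← inner_conj_symm,
          hc z (adjoint (T k) b) k i, map_zero]
      exact inner_self_eq_zero.mp h1
    have hone : (∑ k, T k ∘L adjoint (T k)) b = b := by rw [hsum]; rfl
    rw [← hone]
    simp only [ContinuousLinearMap.sum_apply, ContinuousLinearMap.comp_apply,
      ContinuousLinearMap.coe_comp', Function.comp_apply]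
    rw [Finset.sum_congr rfl fun k _ => by rw [hTb k, map_zero]]
    simp
  · ext x
    have hl : ∑ k, ‖(Pi.single i 1 : Fin d → ℂ) k‖ ^ 2 = 1 := by
      have hterm : ∀ k ∈ Finset.univ, ‖(Pi.single i 1 : Fin d → ℂ) k‖ ^ 2
          = if k = i then (1:ℝ) else 0 := by
        intro k _
        rcases eq_or_ne k i with hk | hk <;> simp [Pi.single_apply, hk]
      rw [Finset.sum_congr rfl hterm, Finset.sum_ite_eq' Finset.univ i (fun _ => (1:ℝ))]
      simp
    have h := key_col hTT hV hcomp hnorm (Pi.single i 1) hl x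
    have hS : (∑ k, (Pi.single i 1 : Fin d → ℂ) k • S k) = S i := by
      simp [Pi.single_apply, ite_smul, Finset.sum_ite_eq]
    have hT : (∑ k, (Pi.single i 1 : Fin d → ℂ) k • T k) = T i := by
      simp [Pi.single_apply, ite_smul, Finset.sum_ite_eq]
    rw [hS, hT] at h
    simp only [ContinuousLinearMap.comp_apply, ContinuousLinearMap.sub_apply,
      ContinuousLinearMap.one_apply, ContinuousLinearMap.zero_apply,
      ContinuousLinearMap.coe_comp', Function.comp_apply]
    rw [h, aux_apply_one V hV, sub_self]
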